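/- Let K₀ be a number field and K a quadratic field extension of K₀, with rings of integers O_{K₀} ⊆ O_K, and let † denote the nontrivial element of Gal(K/K₀). Let O be an order in K containing O_{K₀}, and let 𝔣 = {x ∈ K : x·O_K ⊆ O} be its conductor. Then O† = O, and 𝔣 is generated by an ideal of O_{K₀}: namely 𝔣 = (𝔣 ∩ O_{K₀})·O_K. -/

import Mathlib

open NumberField

/-- An order in a number field `K`: a subring (equivalently, a `ℤ`-subalgebra) of `K` that is
finitely generated as a `ℤ`-module and contains a `ℚ`-basis of `K` (i.e. spans `K` over `ℚ`). -/
def IsOrder (K : Type*) [Field K] [NumberField K] (O : Subalgebra ℤ K) : Prop :=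
  (Subalgebra.toSubmodule O).FG ∧ Submodule.span ℚ (O : Set K) = ⊤

/-- The ring of integers of `K₀` viewed as a subset of `K`. -/
noncomputable def realIntegers (K₀ K : Type*) [Field K₀] [NumberField K₀] [Field K]
    [NumberField K] [Algebra K₀ K] : Set K :=
  Set.range (fun a : 𝓞 K₀ => algebraMap K₀ K (algebraMap (𝓞 K₀) K₀ a))

/-- The conductor of a subset `O` of `K`: the set `{x ∈ K : x · 𝓞 K ⊆ O}`. -/
def conductorSet (K : Type*) [Field K] [NumberField K] (O : Set K) : Set K :=
  {x : K | ∀ y : 𝓞 K, x * algebraMap (𝓞 K) K y ∈ O}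

open scoped nonZeroDivisors

section AuxOrderConductor
section
set_option linter.unusedSectionVars false
variable {K₀ K : Type*} [Field K₀] [NumberField K₀] [Field K] [NumberField K] [Algebra K₀ K]

lemma quad_rel (h2 : Module.finrank K₀ K = 2) (z : K)
    (hz : z ∉ Set.range (algebraMap K₀ K)) :
    ∃ b c : K₀, z ^ 2 + algebraMap K₀ K b * z + algebraMap K₀ K c = 0 := by
  have : FiniteDimensional K₀ K := .of_finrank_eq_succ h2
  have hni : ¬ LinearIndependent K₀ ![z ^ 2, z, 1] := by
    intro h
    have := h.fintype_card_le_finrank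
    rw [h2] at this
    simp at this
  rw [Fintype.not_linearIndependent_iff] at hni
  obtain ⟨g, hg, i, hi⟩ := hni
  set f := algebraMap K₀ K with hf
  have hsum : f (g 0) * z ^ 2 + f (g 1) * z + f (g 2) = 0 := by
    have h' := hg
    simp only [Fin.sum_univ_three, Matrix.cons_val_zero, Matrix.cons_val_one, Matrix.head_cons,
      Matrix.cons_val_two, Matrix.tail_cons, Algebra.smul_def, mul_one] at h'
    exact h'
  have hg0 : g 0 ≠ 0 := by
    intro h0
    have hg1 : g 1 = 0 := by
      by_contra h1
      apply hz
      refine ⟨-(g 2 / g 1), ?_⟩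
      rw [h0, map_zero] at hsum
      rw [map_neg, map_div₀]
      have hf1 : f (g 1) ≠ 0 := fun h => h1 ((map_eq_zero f).mp h)
      field_simp
      linear_combination -hsum
    have hg2 : g 2 = 0 := by
      rw [h0, hg1, map_zero] at hsum
      have : f (g 2) = 0 := by linear_combination hsum
      exact (map_eq_zero f).mp this
    fin_cases i <;> simp_all
  refine ⟨g 1 / g 0, g 2 / g 0, ?_⟩
  rw [map_div₀, map_div₀]
  have hf0 : f (g 0) ≠ 0 := fun h => hg0 ((map_eq_zero f).mp h)
  field_simp
  linear_combination hsum

variable (σ : K ≃ₐ[K₀] K)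

lemma exists_not_fixed (hσ : σ ≠ AlgEquiv.refl) : ∃ w : K, σ w ≠ w := by
  by_contra h
  push_neg at h
  exact hσ (AlgEquiv.ext fun x => (h x).trans rfl)


lemma fixed_mem_range (h2 : Module.finrank K₀ K = 2) (hσ : σ ≠ AlgEquiv.refl) (z : K)
    (hfix : σ z = z) : z ∈ Set.range (algebraMap K₀ K) := by
  by_contra hz
  have : FiniteDimensional K₀ K := .of_finrank_eq_succ h2
  have hind : LinearIndependent K₀ ![1, z] := by
    rw [LinearIndependent.pair_iff]
    intro s t hst
    by_contra hcon
    have ht : t ≠ 0 := by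
      rintro rfl
      simp only [zero_smul, add_zero, smul_eq_zero] at hst
      rcases hst with h | h
      · exact hcon ⟨h, rfl⟩
      · exact one_ne_zero h
    apply hz
    refine ⟨-(s / t), ?_⟩
    rw [map_neg, map_div₀]
    have : algebraMap K₀ K s + algebraMap K₀ K t * z = 0 := by
      rw [Algebra.smul_def, Algebra.smul_def, mul_one] at hst
      exact hst
    have htK : algebraMap K₀ K t ≠ 0 := fun h => ht ((map_eq_zero _).mp h)
    field_simp
    linear_combination -this
  have hspan := hind.span_eq_top_of_card_eq_finrank (by simp [h2])
  obtain ⟨w, hw⟩ := exists_not_fixed σ hσ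
  have hwmem : w ∈ Submodule.span K₀ (Set.range ![1, z]) := by rw [hspan]; trivial
  have hrange : Set.range ![(1 : K), z] = {1, z} := by
    simp [Matrix.range_cons, Matrix.range_empty, Set.pair_comm]
  rw [hrange, Submodule.mem_span_pair] at hwmem
  obtain ⟨a, b, hab⟩ := hwmem
  apply hw
  rw [← hab]
  rw [map_add, show σ (a • 1) = a • σ 1 from map_smul σ.toLinearEquiv a 1,
    show σ (b • z) = b • σ z from map_smul σ.toLinearEquiv b z, map_one, hfix]


lemma conj_formula (h2 : Module.finrank K₀ K = 2) (hσ : σ ≠ AlgEquiv.refl) (z : K)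
    (hz : z ∉ Set.range (algebraMap K₀ K)) :
    ∃ b : K₀, σ z = - algebraMap K₀ K b - z := by
  obtain ⟨b, c, hbc⟩ := quad_rel h2 z hz
  have h2' : (σ z) ^ 2 + algebraMap K₀ K b * σ z + algebraMap K₀ K c = 0 := by
    have := congrArg σ hbc
    simpa [map_add, map_mul, map_pow, AlgEquiv.commutes] using this
  have hfact : (σ z - z) * (σ z + z + algebraMap K₀ K b) = 0 := by
    linear_combination h2' - hbc
  rcases mul_eq_zero.mp hfact with h | h
  · exact absurd (fixed_mem_range σ h2 hσ z (by linear_combination h)) hz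
  · exact ⟨b, by linear_combination h⟩


lemma sigma_sigma (h2 : Module.finrank K₀ K = 2) (hσ : σ ≠ AlgEquiv.refl) (z : K) :
    σ (σ z) = z := by
  by_cases hz : z ∈ Set.range (algebraMap K₀ K)
  · obtain ⟨a, rfl⟩ := hz
    rw [AlgEquiv.commutes, AlgEquiv.commutes]
  · obtain ⟨b, hb⟩ := conj_formula σ h2 hσ z hz
    rw [hb, map_sub, map_neg, AlgEquiv.commutes, hb]
    ring

variable (O : Subalgebra ℤ K)

lemma memO_isIntegral (hO : IsOrder K O) {x : K} (hx : x ∈ O) : IsIntegral ℤ x :=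
  IsIntegral.of_mem_of_fg O hO.1 x hx


lemma sigma_isIntegral {z : K} (hz : IsIntegral ℤ z) : IsIntegral ℤ (σ z) := by
  have := hz.map (RingHom.toIntAlgHom (σ : K →+* K))
  simpa using this


lemma real_of_fixed_integral (h2 : Module.finrank K₀ K = 2) (hσ : σ ≠ AlgEquiv.refl) {z : K}
    (hfix : σ z = z) (hint : IsIntegral ℤ z) : z ∈ realIntegers K₀ K := by
  obtain ⟨a, ha⟩ := fixed_mem_range σ h2 hσ z hfix
  have hai : IsIntegral ℤ a := by
    rw [← isIntegral_algebraMap_iff (algebraMap K₀ K).injective]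
    rw [ha]; exact hint
  exact ⟨⟨a, hai⟩, ha⟩


lemma sigma_memO (h2 : Module.finrank K₀ K = 2) (hσ : σ ≠ AlgEquiv.refl) (hO : IsOrder K O)
    (hRM : realIntegers K₀ K ⊆ (O : Set K)) {x : K} (hx : x ∈ O) : σ x ∈ O := by
  by_cases hz : x ∈ Set.range (algebraMap K₀ K)
  · obtain ⟨a, rfl⟩ := hz
    rw [AlgEquiv.commutes]; exact hx
  · obtain ⟨b, hb⟩ := conj_formula σ h2 hσ x hz
    have hfb : algebraMap K₀ K b = -(x + σ x) := by linear_combination hb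
    have hint : IsIntegral ℤ (algebraMap K₀ K b) := by
      rw [hfb]
      exact ((memO_isIntegral O hO hx).add (sigma_isIntegral σ (memO_isIntegral O hO hx))).neg
    have hreal : algebraMap K₀ K b ∈ realIntegers K₀ K :=
      real_of_fixed_integral σ h2 hσ (AlgEquiv.commutes σ b) hint
    rw [hb]
    exact O.sub_mem (O.neg_mem (hRM hreal)) hx


lemma part1 (h2 : Module.finrank K₀ K = 2) (hσ : σ ≠ AlgEquiv.refl) (hO : IsOrder K O)
    (hRM : realIntegers K₀ K ⊆ (O : Set K)) :
    O.map (RingHom.toIntAlgHom σ.toRingEquiv.toRingHom) = O := by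
  ext y
  simp only [Subalgebra.mem_map]
  constructor
  · rintro ⟨x, hx, rfl⟩
    exact sigma_memO σ O h2 hσ hO hRM hx
  · intro hy
    exact ⟨σ y, sigma_memO σ O h2 hσ hO hRM hy, sigma_sigma σ h2 hσ y⟩

lemma conductor_subset_span (h2 : Module.finrank K₀ K = 2) (hσ : σ ≠ AlgEquiv.refl)
    (hO : IsOrder K O) (hRM : realIntegers K₀ K ⊆ (O : Set K)) {x : K}
    (hx : x ∈ conductorSet K (O : Set K)) :
    x ∈ Submodule.span (𝓞 K) (conductorSet K (O : Set K) ∩ realIntegers K₀ K) := by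
  classical
  set f := algebraMap K₀ K with hf
  -- x ∈ O
  have hxO : x ∈ O := by simpa using hx 1
  -- existence of a non-real integer ω
  have hexw : ∃ w : 𝓞 K, (w : K) ∉ Set.range f := by
    by_contra hcon
    push_neg at hcon
    have hsurj : Function.Surjective f := by
      intro z
      obtain ⟨a, b, hb, rfl⟩ := IsFractionRing.div_surjective (A := 𝓞 K) z
      obtain ⟨a₀, ha⟩ := hcon a
      obtain ⟨b₀, hb₀⟩ := hcon b
      exact ⟨a₀ / b₀, by rw [map_div₀, ha, hb₀]⟩
    have hrk : Module.finrank K₀ K = 1 := by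
      let e : K₀ ≃ₐ[K₀] K := AlgEquiv.ofBijective (Algebra.ofId K₀ K)
        ⟨fun a b h => (algebraMap K₀ K).injective h, hsurj⟩
      rw [← e.toLinearEquiv.finrank_eq, Module.finrank_self]
    omega
  obtain ⟨w₀, hw₀⟩ := hexw
  set ω : K := (w₀ : K) with hω
  set η : K := ω - σ ω with hη
  have hη0 : η ≠ 0 := by
    intro h
    apply hw₀
    exact fixed_mem_range σ h2 hσ ω (by linear_combination -h)
  set lam : K → K := fun t => (t - σ t) / η with hlam
  have hlam_add : ∀ s t : K, lam (s + t) = lam s + lam t := by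
    intro s t
    simp only [hlam, map_add]
    ring
  have hlam_range : ∀ t : K, lam t ∈ Set.range f := by
    intro t
    apply fixed_mem_range σ h2 hσ
    simp only [hlam]
    rw [map_div₀, map_sub, map_sub, sigma_sigma σ h2 hσ, sigma_sigma σ h2 hσ]
    rw [div_eq_div_iff (by intro h; apply hη0; linear_combination -h) hη0]
    ring
  have hlamω : lam ω = 1 := by
    simp only [hlam]
    exact div_self hη0
  -- the key identity
  have hkey : ∀ t z : K, lam z * t = lam (t * z) - lam t * σ z := by
    intro t z
    simp only [hlam, map_mul]
    field_simp
    ring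
  -- lam₀ : K → K₀
  choose lam₀ hlam₀ using hlam_range
  -- ψ as additive map on 𝓞 K
  have hfinj : Function.Injective f := (algebraMap K₀ K).injective
  have hψadd : ∀ s t : K, lam₀ (s + t) = lam₀ s + lam₀ t := by
    intro s t
    apply hfinj
    rw [map_add, hlam₀, hlam₀, hlam₀, hlam_add]
  have hψzero : lam₀ 0 = 0 := by
    apply hfinj
    rw [map_zero, hlam₀]
    simp [hlam]
  let Ψ : (𝓞 K) →+ K₀ :=
    { toFun := fun w => lam₀ (w : K)
      map_zero' := by simpa using hψzero
      map_add' := by intro a b; simp only [map_add]; exact hψadd _ _ }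
  -- finite generators of 𝓞 K over ℤ
  obtain ⟨s, hs⟩ : ∃ s : Finset (𝓞 K), Submodule.span ℤ (s : Set (𝓞 K)) = ⊤ :=
    Module.Finite.fg_top (R := ℤ) (M := 𝓞 K)
  set Bset : Set K₀ := (fun w : 𝓞 K => lam₀ (w : K)) '' s with hBset
  set Bsub : Submodule (𝓞 K₀) K₀ := Submodule.span (𝓞 K₀) Bset with hBsub
  have hBfg : Bsub.FG := Submodule.fg_span ((s.finite_toSet).image _)
  obtain ⟨B, hBcoe⟩ : ∃ B : FractionalIdeal (𝓞 K₀)⁰ K₀,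
      (B : Submodule (𝓞 K₀) K₀) = Bsub :=
    ⟨⟨Bsub, FractionalIdeal.isFractional_of_fg hBfg⟩, rfl⟩
  have hmemB : ∀ w : 𝓞 K, lam₀ (w : K) ∈ Bsub := by
    intro w
    have hw : w ∈ Submodule.span ℤ (s : Set (𝓞 K)) := by rw [hs]; trivial
    have : Ψ w ∈ Bsub := by
      induction hw using Submodule.span_induction with
      | mem g hg => exact Submodule.subset_span ⟨g, hg, rfl⟩
      | zero => simpa using Bsub.zero_mem
      | add a b _ _ ha hb => rw [map_add]; exact Bsub.add_mem ha hb
      | smul n a _ ha =>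
          rw [map_zsmul]
          exact zsmul_mem ha n
    exact this
  have hmemB' : ∀ w : 𝓞 K, lam₀ (w : K) ∈ B := fun w =>
    FractionalIdeal.mem_coe.mp (by rw [hBcoe]; exact hmemB w)
  have h1B : (1 : K₀) ∈ Bsub := by
    have : lam₀ ω = 1 := by
      apply hfinj
      rw [hlam₀, hlamω, map_one]
    rw [← this]
    exact hmemB w₀
  have hB0 : B ≠ 0 := by
    intro h
    have h1 : (1 : K₀) ∈ B := FractionalIdeal.mem_coe.mp (by rw [hBcoe]; exact h1B)
    rw [h] at h1
    exact one_ne_zero ((FractionalIdeal.mem_zero_iff _).mp h1)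
  -- the s-lemma
  have hslem : ∀ e : K₀, (∀ b ∈ B, e * b ∈ (1 : FractionalIdeal (𝓞 K₀)⁰ K₀)) →
      ∀ u : K, u ∈ O → f e * lam u ∈ conductorSet K (O : Set K) ∩ realIntegers K₀ K := by
    intro e he u huO
    have huint : IsIntegral ℤ u := memO_isIntegral O hO huO
    have hreal : ∀ v : K, IsIntegral ℤ v → f e * lam v ∈ realIntegers K₀ K := by
      intro v hvint
      have hv : lam₀ v = Ψ ⟨v, hvint⟩ := rfl
      have hmem : lam₀ v ∈ B := hmemB' ⟨v, hvint⟩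
      obtain ⟨a₀, ha₀⟩ := (FractionalIdeal.mem_one_iff _).mp (he _ hmem)
      refine ⟨a₀, ?_⟩
      show f (algebraMap (𝓞 K₀) K₀ a₀) = f e * lam v
      rw [ha₀, map_mul, hlam₀]
    constructor
    · -- conductor membership
      intro y
      have hid := hkey (algebraMap (𝓞 K) K y) u
      have hmul : f e * lam u * algebraMap (𝓞 K) K y
          = f e * lam (algebraMap (𝓞 K) K y * u) - (f e * lam (algebraMap (𝓞 K) K y)) * σ u := by
        rw [mul_comm (f e * lam u) _]
        calc algebraMap (𝓞 K) K y * (f e * lam u)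
            = f e * (lam u * algebraMap (𝓞 K) K y) := by ring
          _ = _ := by rw [hid]; ring
      rw [hmul]
      have ht1 : f e * lam (algebraMap (𝓞 K) K y * u) ∈ realIntegers K₀ K := by
        apply hreal
        exact (RingOfIntegers.isIntegral y).map (IsScalarTower.toAlgHom ℤ (𝓞 K) K) |>.mul huint
      have ht2 : f e * lam (algebraMap (𝓞 K) K y) ∈ realIntegers K₀ K := by
        apply hreal
        exact (RingOfIntegers.isIntegral y).map (IsScalarTower.toAlgHom ℤ (𝓞 K) K)
      exact O.sub_mem (hRM ht1) (O.mul_mem (hRM ht2) (sigma_memO σ O h2 hσ hO hRM huO))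
    · exact hreal u huint
  -- main computation
  set M := Submodule.span (𝓞 K) (conductorSet K (O : Set K) ∩ realIntegers K₀ K) with hM
  have hone : (1 : K₀) ∈ (B * B⁻¹ : FractionalIdeal (𝓞 K₀)⁰ K₀) := by
    rw [mul_inv_cancel₀ hB0]
    exact (FractionalIdeal.mem_one_iff _).mpr ⟨1, map_one _⟩
  have hmain : ∀ t : K₀, t ∈ (B * B⁻¹ : FractionalIdeal (𝓞 K₀)⁰ K₀) → f t * x ∈ M := by
    intro t ht
    rw [← FractionalIdeal.mem_coe, FractionalIdeal.coe_mul] at ht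
    refine Submodule.mul_induction_on ht ?_ ?_
    · intro m hm e he
      have he' : ∀ b ∈ B, e * b ∈ (1 : FractionalIdeal (𝓞 K₀)⁰ K₀) :=
        (FractionalIdeal.mem_inv_iff hB0).mp (FractionalIdeal.mem_coe.mp he)
      rw [hBcoe] at hm
      have hm' := hm
      clear hm
      induction hm' using Submodule.span_induction with
      | mem b hb =>
          obtain ⟨w, hw, rfl⟩ := hb
          -- goal : f (lam₀ ↑w * e) * x ∈ M
          have hwint : IsIntegral ℤ ((w : K)) := RingOfIntegers.isIntegral_coe w
          have hexp : f (lam₀ (w : K) * e) * x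
              = f e * lam (x * (w : K)) - (σ (w : K)) * (f e * lam x) := by
            rw [map_mul, hlam₀]
            have := hkey x (w : K)
            calc lam (w : K) * f e * x = f e * (lam (w:K) * x) := by ring
              _ = f e * (lam (x * (w:K)) - lam x * σ (w:K)) := by rw [this]
              _ = _ := by ring
          rw [hexp]
          have hxw : x * (w : K) ∈ O := hx w
          have ht1 : f e * lam (x * (w : K)) ∈
              conductorSet K (O : Set K) ∩ realIntegers K₀ K := hslem e he' _ hxw
          have ht2 : f e * lam x ∈
              conductorSet K (O : Set K) ∩ realIntegers K₀ K := hslem e he' _ hxO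
          refine M.sub_mem (Submodule.subset_span ht1) ?_
          have hσw : IsIntegral ℤ (σ (w : K)) := sigma_isIntegral σ hwint
          have : (⟨σ (w : K), hσw⟩ : 𝓞 K) • (f e * lam x) = σ (w : K) * (f e * lam x) := by
            rw [Algebra.smul_def]; rfl
          rw [← this]
          exact M.smul_mem _ (Submodule.subset_span ht2)
      | zero => simpa using M.zero_mem
      | add a b _ _ ha hb =>
          rw [add_mul, map_add, add_mul]
          exact M.add_mem ha hb
      | smul c m _ hmem =>
          have hcs : ((c • m) * e) = c • (m * e) := smul_mul_assoc c m e
          rw [hcs, Algebra.smul_def, map_mul]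
          have hcint : IsIntegral ℤ (f (algebraMap (𝓞 K₀) K₀ c)) := by
            have := RingOfIntegers.isIntegral_coe c
            exact (this.map (IsScalarTower.toAlgHom ℤ K₀ K))
          have : (⟨f (algebraMap (𝓞 K₀) K₀ c), hcint⟩ : 𝓞 K) • (f (m * e) * x)
              = f (algebraMap (𝓞 K₀) K₀ c) * (f (m * e) * x) := by
            rw [Algebra.smul_def]; rfl
          rw [mul_assoc, ← this]
          exact M.smul_mem _ hmem
    · intro t1 t2 h1 h2
      rw [map_add, add_mul]
      exact M.add_mem h1 h2
  have := hmain 1 hone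
  simpa using this

lemma span_subset_conductor {x : K}
    (hxs : x ∈ Submodule.span (𝓞 K) (conductorSet K (O : Set K) ∩ realIntegers K₀ K)) :
    x ∈ conductorSet K (O : Set K) := by
  induction hxs using Submodule.span_induction with
  | mem a ha => exact ha.1
  | zero => intro y; rw [zero_mul]; exact O.zero_mem
  | add a b _ _ ha hb =>
      intro y
      rw [add_mul]
      exact O.add_mem (ha y) (hb y)
  | smul c a _ ha =>
      intro y
      rw [Algebra.smul_def]
      have : algebraMap (𝓞 K) K c * a * algebraMap (𝓞 K) K y
          = a * algebraMap (𝓞 K) K (c * y) := by rw [map_mul]; ring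
      rw [this]
      exact ha (c * y)

end
end AuxOrderConductor

/-- Let `K / K₀` be a quadratic extension of number fields with nontrivial Galois
automorphism `σ = †`, and let `O` be an order of `K` containing the ring of integers of
`K₀`, with conductor `𝔣`.  Then `O† = O`, and `𝔣` is generated by an ideal of `𝓞 K₀`:
namely `𝔣 = (𝔣 ∩ 𝓞 K₀) · 𝓞 K`. -/
theorem maxRM_order_conj_stable_and_conductor_real (K₀ K : Type*) [Field K₀] [NumberField K₀]
    [Field K] [NumberField K] [Algebra K₀ K] (h2 : Module.finrank K₀ K = 2)
    (σ : K ≃ₐ[K₀] K) (hσ : σ ≠ AlgEquiv.refl)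
    (O : Subalgebra ℤ K) (hO : IsOrder K O)
    (hRM : realIntegers K₀ K ⊆ (O : Set K)) :
    O.map (RingHom.toIntAlgHom σ.toRingEquiv.toRingHom) = O ∧
      conductorSet K (O : Set K) =
        (Submodule.span (𝓞 K) (conductorSet K (O : Set K) ∩ realIntegers K₀ K) :
          Submodule (𝓞 K) K) := by
  constructor
  · exact part1 σ O h2 hσ hO hRM
  · refine Set.Subset.antisymm ?_ ?_
    · intro x hx
      exact conductor_subset_span σ O h2 hσ hO hRM hx
    · intro x hx
      exact span_subset_conductor O hx
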